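/- Let ζ₁, ζ₂ ∈ ℂ with |ζ₁| = |ζ₂| = 1, and let u : ℕ → 𝔻², u_n = (u_n¹, u_n²), be a sequence converging to (ζ₁, ζ₂). Set T₁ := limsup_{n→∞} (1 − |u_n¹|²)/(1 − |u_n²|²) and T₂ := limsup_{n→∞} (1 − |u_n²|²)/(1 − |u_n¹|²), the limsups taken in [0, ∞]. If T₁ > 1 and T₂ > 1, then for every R > 0 the horosphere of u in the bidisc with base point (0,0) satisfies E_{(0,0)}(u, R) = {z₁ ∈ 𝔻 : |ζ₁ − z₁|²/(1 − |z₁|²) < R} × {z₂ ∈ 𝔻 : |ζ₂ − z₂|²/(1 − |z₂|²) < R}. -/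

import Mathlib

open Filter Set

noncomputable section

/-- The inverse hyperbolic tangent: `artanh r = (1/2) log ((1+r)/(1-r))`. -/
def artanh (r : ℝ) : ℝ := (1 / 2) * Real.log ((1 + r) / (1 - r))

/-- The Poincaré (Kobayashi) distance on the unit disc
`ρ(z,w) = artanh |(z - w)/(1 - conj w * z)|`. -/
def pd (z w : ℂ) : ℝ := artanh (‖(z - w) / (1 - (starRingEnd ℂ) w * z)‖)

/-- The Kobayashi distance of the bidisc. -/
def kd2 (z w : ℂ × ℂ) : ℝ := max (pd z.1 w.1) (pd z.2 w.2)

/-- The open unit bidisc. -/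
def bidisc : Set (ℂ × ℂ) := {z : ℂ × ℂ | ‖z.1‖ < 1 ∧ ‖z.2‖ < 1}

/-- The horosphere in the bidisc of a sequence `u` with respect to base point `x`
and radius `R`. -/
def biE (x : ℂ × ℂ) (u : ℕ → ℂ × ℂ) (R : ℝ) : Set (ℂ × ℂ) :=
  {z : ℂ × ℂ | z ∈ bidisc ∧
    Filter.limsup (fun n => kd2 z (u n) - kd2 x (u n)) Filter.atTop < (1 / 2) * Real.log R}

lemma key_normSq (z w : ℂ) :
    Complex.normSq (1 - (starRingEnd ℂ) w * z) - Complex.normSq (z - w)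
      = (1 - Complex.normSq z) * (1 - Complex.normSq w) := by
  simp only [Complex.normSq_apply, Complex.sub_re, Complex.sub_im, Complex.mul_re,
    Complex.mul_im, Complex.one_re, Complex.one_im, Complex.conj_re, Complex.conj_im]
  ring

lemma denom_ne (z w : ℂ) (hz : ‖z‖ < 1) (hw : ‖w‖ < 1) :
    (1 - (starRingEnd ℂ) w * z) ≠ 0 := by
  intro h
  have : ‖(starRingEnd ℂ) w * z‖ = 1 := by
    have : (starRingEnd ℂ) w * z = 1 := by linear_combination -h
    simp [this]
  rw [norm_mul, Complex.norm_conj] at this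
  nlinarith [norm_nonneg z, norm_nonneg w]

lemma t_lt_one (z w : ℂ) (hz : ‖z‖ < 1) (hw : ‖w‖ < 1) :
    ‖(z - w) / (1 - (starRingEnd ℂ) w * z)‖ < 1 := by
  rw [norm_div, div_lt_one (by
    exact (norm_pos_iff.mpr (denom_ne z w hz hw)))]
  have hk := key_normSq z w
  have h1 : Complex.normSq z < 1 := by rw [← Complex.sq_norm]; nlinarith [norm_nonneg z]
  have h2 : Complex.normSq w < 1 := by rw [← Complex.sq_norm]; nlinarith [norm_nonneg w]
  have : Complex.normSq (z - w) < Complex.normSq (1 - (starRingEnd ℂ) w * z) := by nlinarith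
  rw [← Complex.sq_norm, ← Complex.sq_norm] at this
  nlinarith [norm_nonneg (z-w), norm_nonneg (1 - (starRingEnd ℂ) w * z)]

lemma pd_zero (w : ℂ) : pd 0 w = artanh (‖w‖) := by
  simp [pd]

lemma artanh_mono {x y : ℝ} (hx : 0 ≤ x) (hxy : x ≤ y) (hy : y < 1) : artanh x ≤ artanh y := by
  unfold artanh
  have h1 : (0:ℝ) < 1 - y := by linarith
  have h2 : (0:ℝ) < 1 - x := by linarith
  have hA : (0:ℝ) < (1 + x) / (1 - x) := by positivity
  have : (1 + x) / (1 - x) ≤ (1 + y) / (1 - y) := by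
    rw [div_le_div_iff₀ h2 h1]; nlinarith
  have := Real.log_le_log hA this
  linarith

lemma pd_diff_eq (z w : ℂ) (hz : ‖z‖ < 1) (hw : ‖w‖ < 1) :
    pd z w - pd 0 w = (1 / 2) * Real.log
      ((1 + ‖(z - w) / (1 - (starRingEnd ℂ) w * z)‖) ^ 2
        * (‖1 - (starRingEnd ℂ) w * z‖) ^ 2
        / ((1 - (‖z‖) ^ 2) * (1 + ‖w‖) ^ 2)) := by
  set t := ‖(z - w) / (1 - (starRingEnd ℂ) w * z)‖ with ht
  set s := ‖w‖ with hs
  set D := ‖1 - (starRingEnd ℂ) w * z‖ with hD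
  have htlt : t < 1 := t_lt_one z w hz hw
  have ht0 : 0 ≤ t := norm_nonneg _
  have hs0 : 0 ≤ s := norm_nonneg _
  have hD0 : 0 < D := norm_pos_iff.mpr (denom_ne z w hz hw)
  have hz2 : (0:ℝ) < 1 - (‖z‖)^2 := by nlinarith [norm_nonneg z]
  have hkey : (1 - t^2) * D^2 = (1 - (‖z‖)^2) * (1 - s^2) := by
    have h1 : t * D = ‖z - w‖ := by
      rw [ht, hD, norm_div]; exact div_mul_cancel₀ _ hD0.ne'
    have hk := key_normSq z w
    rw [← Complex.sq_norm, ← Complex.sq_norm, ← Complex.sq_norm, ← Complex.sq_norm] at hk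
    rw [← hs, ← hD] at hk
    have h2 : t^2 * D^2 = ‖z - w‖^2 := by rw [← mul_pow, h1]
    linarith
  have h1t : (0:ℝ) < 1 - t := by linarith
  have h1s : (0:ℝ) < 1 - s := by linarith
  rw [pd, pd_zero, artanh, artanh, ← ht, ← hs]
  rw [← mul_sub, ← Real.log_div (by positivity) (by positivity)]
  have hargs : (1 + t) / (1 - t) / ((1 + s) / (1 - s))
      = (1 + t) ^ 2 * D ^ 2 / ((1 - (‖z‖) ^ 2) * (1 + s) ^ 2) := by
    rw [div_div_div_eq, div_eq_div_iff (by positivity) (by positivity)]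
    linear_combination (-(1 + t) * (1 + s)) * hkey
  rw [hargs]

lemma pd_diff_tendsto (ζ z : ℂ) (hζ : ‖ζ‖ = 1) (hz : ‖z‖ < 1)
    (v : ℕ → ℂ) (hv : ∀ n, ‖v n‖ < 1) (hc : Tendsto v atTop (nhds ζ)) :
    Tendsto (fun n => pd z (v n) - pd 0 (v n)) atTop
      (nhds ((1 / 2) * Real.log ((‖ζ - z‖) ^ 2 / (1 - (‖z‖) ^ 2)))) := by
  have hzζ : ζ - z ≠ 0 := by
    intro h
    have : ζ = z := by linear_combination h
    rw [← this, hζ] at hz; exact lt_irrefl _ hz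
  have habs : ‖1 - (starRingEnd ℂ) ζ * z‖ = ‖ζ - z‖ := by
    have h1 : (starRingEnd ℂ) ζ * ζ = 1 := by
      rw [Complex.conj_mul', hζ]; norm_num
    have : 1 - (starRingEnd ℂ) ζ * z = (starRingEnd ℂ) ζ * (ζ - z) := by
      rw [mul_sub, h1]
    rw [this, norm_mul, Complex.norm_conj, hζ, one_mul]
  have hden : (1 - (starRingEnd ℂ) ζ * z) ≠ 0 := by
    intro h
    rw [h, norm_zero] at habs
    exact hzζ (norm_eq_zero.mp habs.symm)
  set L : ℝ := (‖ζ - z‖) ^ 2 / (1 - (‖z‖) ^ 2) with hL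
  have hz2 : (0:ℝ) < 1 - (‖z‖) ^ 2 := by
    nlinarith [norm_nonneg z]
  have hLpos : 0 < L := by
    have : 0 < ‖ζ - z‖ := norm_pos_iff.mpr hzζ
    positivity
  set F : ℂ → ℝ := fun w =>
    (1 + ‖(z - w) / (1 - (starRingEnd ℂ) w * z)‖) ^ 2
      * (‖1 - (starRingEnd ℂ) w * z‖) ^ 2
      / ((1 - (‖z‖) ^ 2) * (1 + ‖w‖) ^ 2) with hF
  have hFc : Tendsto (fun n => F (v n)) atTop (nhds L) := by
    have hd : Tendsto (fun n => 1 - (starRingEnd ℂ) (v n) * z) atTop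
        (nhds (1 - (starRingEnd ℂ) ζ * z)) := by
      exact (tendsto_const_nhds.sub (((Complex.continuous_conj.tendsto ζ).comp hc).mul_const z))
    have hDt : Tendsto (fun n => ‖1 - (starRingEnd ℂ) (v n) * z‖) atTop
        (nhds (‖1 - (starRingEnd ℂ) ζ * z‖)) :=
      (continuous_norm.tendsto _).comp hd
    have hnum : Tendsto (fun n => ‖z - v n‖) atTop
        (nhds (‖z - ζ‖)) :=
      (continuous_norm.tendsto _).comp (tendsto_const_nhds.sub hc)
    have htt : Tendsto (fun n => ‖(z - v n) / (1 - (starRingEnd ℂ) (v n) * z)‖)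
        atTop (nhds 1) := by
      have hdiv := hnum.div hDt (norm_ne_zero_iff.mpr hden)
      have hv1 : ‖z - ζ‖ / ‖1 - (starRingEnd ℂ) ζ * z‖ = 1 := by
        rw [habs, norm_sub_rev]
        field_simp [norm_ne_zero_iff.mpr hzζ]
      rw [hv1] at hdiv
      refine hdiv.congr fun n => ?_
      simp [norm_div]
    have hst : Tendsto (fun n => ‖v n‖) atTop (nhds 1) := by
      have := (continuous_norm.tendsto ζ).comp hc
      rwa [hζ] at this
    have : Tendsto (fun n => F (v n)) atTop
        (nhds ((1 + 1)^2 * (‖1 - (starRingEnd ℂ) ζ * z‖)^2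
          / ((1 - (‖z‖)^2) * (1 + 1)^2))) := by
      apply Tendsto.div
      · exact (((tendsto_const_nhds.add htt).pow 2).mul (hDt.pow 2))
      · exact tendsto_const_nhds.mul ((tendsto_const_nhds.add hst).pow 2)
      · positivity
    convert this using 2
    rw [habs, hL]
    field_simp
  have heq : ∀ n, pd z (v n) - pd 0 (v n) = (1 / 2) * Real.log (F (v n)) := fun n =>
    pd_diff_eq z (v n) hz (hv n)
  rw [show nhds ((1/2) * Real.log L) = nhds ((1/2) * Real.log L) from rfl]
  have hlog : Tendsto (fun n => Real.log (F (v n))) atTop (nhds (Real.log L)) :=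
    (Real.continuousAt_log (ne_of_gt hLpos)).tendsto.comp hFc
  have := hlog.const_mul (1/2 : ℝ)
  simp only [← heq] at this
  exact this

lemma max_sub_max_le (a b c d : ℝ) : max a b - max c d ≤ max (a - c) (b - d) := by
  rw [sub_le_iff_le_add, max_le_iff]
  constructor
  · calc a = (a - c) + c := by ring
      _ ≤ max (a - c) (b - d) + max c d := add_le_add (le_max_left _ _) (le_max_left _ _)
  · calc b = (b - d) + d := by ring
      _ ≤ max (a - c) (b - d) + max c d := add_le_add (le_max_right _ _) (le_max_right _ _)

lemma min_le_max_sub_max (a b c d : ℝ) : min (a - c) (b - d) ≤ max a b - max c d := by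
  rcases le_total c d with h | h
  · rw [max_eq_right h]
    exact le_trans (min_le_right _ _) (sub_le_sub_right (le_max_right a b) d)
  · rw [max_eq_left h]
    exact le_trans (min_le_left _ _) (sub_le_sub_right (le_max_left a b) c)

lemma limsup_max_sub_max {a b c d : ℕ → ℝ} {α β : ℝ}
    (ha : Tendsto (fun n => a n - c n) atTop (nhds α))
    (hb : Tendsto (fun n => b n - d n) atTop (nhds β))
    (h1 : ∃ᶠ n in atTop, d n ≤ c n)
    (h2 : ∃ᶠ n in atTop, c n ≤ d n) :
    Filter.limsup (fun n => max (a n) (b n) - max (c n) (d n)) Filter.atTop = max α β := by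
  set g := fun n => max (a n) (b n) - max (c n) (d n) with hg
  have hub : ∀ n, g n ≤ max (a n - c n) (b n - d n) := fun n => max_sub_max_le _ _ _ _
  have hmaxt : Tendsto (fun n => max (a n - c n) (b n - d n)) atTop (nhds (max α β)) :=
    ha.max hb
  have hbdd : IsBoundedUnder (· ≤ ·) atTop g :=
    (hmaxt.isBoundedUnder_le).mono_le (Eventually.of_forall hub)
  have hlb : ∀ n, min (a n - c n) (b n - d n) ≤ g n := fun n => min_le_max_sub_max _ _ _ _
  have hmint : Tendsto (fun n => min (a n - c n) (b n - d n)) atTop (nhds (min α β)) :=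
    ha.min hb
  have hbdd' : IsBoundedUnder (· ≥ ·) atTop g :=
    (hmint.isBoundedUnder_ge).mono_ge (Eventually.of_forall hlb)
  have hcb : IsCoboundedUnder (· ≤ ·) atTop g := hbdd'.isCoboundedUnder_le
  have hupper : Filter.limsup g atTop ≤ max α β := by
    calc Filter.limsup g atTop
        ≤ Filter.limsup (fun n => max (a n - c n) (b n - d n)) atTop :=
          Filter.limsup_le_limsup (Eventually.of_forall hub) hcb hmaxt.isBoundedUnder_le
      _ = max α β := hmaxt.limsup_eq
  have hlow : ∀ (γ : ℝ) (e f : ℕ → ℝ), Tendsto (fun n => e n - f n) atTop (nhds γ) →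
      (∃ᶠ n in atTop, max (c n) (d n) = f n) → (∀ n, e n ≤ max (a n) (b n)) →
      γ ≤ Filter.limsup g atTop := by
    intro γ e f he hfreq hle
    refine le_of_forall_lt fun x hx => ?_
    set x' := (x + γ) / 2 with hx'
    have hxx' : x < x' := by rw [hx']; linarith
    have hx'γ : x' < γ := by rw [hx']; linarith
    have hev : ∀ᶠ n in atTop, x' < e n - f n := he.eventually_const_lt hx'γ
    have hfr : ∃ᶠ n in atTop, x' ≤ g n := by
      refine (hfreq.and_eventually hev).mono fun n ⟨hn1, hn2⟩ => ?_
      have : e n - f n ≤ g n := by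
        rw [hg]; simp only; rw [hn1]
        exact sub_le_sub_right (hle n) _
      linarith
    exact lt_of_lt_of_le hxx' (le_limsup_of_frequently_le hfr hbdd)
  refine le_antisymm hupper (max_le ?_ ?_)
  · exact hlow α a c ha (h1.mono fun n hn => max_eq_left hn) fun n => le_max_left _ _
  · exact hlow β b d hb (h2.mono fun n hn => max_eq_right hn) fun n => le_max_right _ _


lemma half_log_lt_half_log {x R : ℝ} (hx : 0 < x) (hR : 0 < R) :
    (1 / 2 : ℝ) * Real.log x < (1 / 2) * Real.log R ↔ x < R := by
  rw [mul_lt_mul_iff_right₀ (by norm_num : (0:ℝ) < 1/2), Real.log_lt_log_iff hx hR]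

theorem biE_of_corner_point (ζ₁ ζ₂ : ℂ) (hζ₁ : ‖ζ₁‖ = 1) (hζ₂ : ‖ζ₂‖ = 1)
    (u : ℕ → ℂ × ℂ) (hu : ∀ n, u n ∈ bidisc)
    (hconv : Filter.Tendsto u Filter.atTop (nhds (ζ₁, ζ₂)))
    (hT₁ : 1 < Filter.limsup (fun n =>
      ENNReal.ofReal ((1 - (‖(u n).1‖) ^ 2) / (1 - (‖(u n).2‖) ^ 2)))
      Filter.atTop)
    (hT₂ : 1 < Filter.limsup (fun n =>
      ENNReal.ofReal ((1 - (‖(u n).2‖) ^ 2) / (1 - (‖(u n).1‖) ^ 2)))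
      Filter.atTop) :
    ∀ R > (0 : ℝ), biE ((0 : ℂ), (0 : ℂ)) u R =
      {z₁ : ℂ | ‖z₁‖ < 1 ∧
        (‖ζ₁ - z₁‖) ^ 2 / (1 - (‖z₁‖) ^ 2) < R} ×ˢ
      {z₂ : ℂ | ‖z₂‖ < 1 ∧
        (‖ζ₂ - z₂‖) ^ 2 / (1 - (‖z₂‖) ^ 2) < R} := by
  intro R hR
  have hu1 : ∀ n, ‖(u n).1‖ < 1 := fun n => (hu n).1
  have hu2 : ∀ n, ‖(u n).2‖ < 1 := fun n => (hu n).2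
  have hc1 : Tendsto (fun n => (u n).1) atTop (nhds ζ₁) :=
    (continuous_fst.tendsto (ζ₁, ζ₂)).comp hconv
  have hc2 : Tendsto (fun n => (u n).2) atTop (nhds ζ₂) :=
    (continuous_snd.tendsto (ζ₁, ζ₂)).comp hconv
  -- frequently coordinate 1 dominates the base distance
  have hfr1 : ∃ᶠ n in atTop, pd 0 (u n).2 ≤ pd 0 (u n).1 := by
    have := Filter.frequently_lt_of_lt_limsup (by isBoundedDefault) hT₂
    refine this.mono fun n hn => ?_
    rw [ENNReal.one_lt_ofReal] at hn
    have h1 : (0:ℝ) < 1 - (‖(u n).1‖) ^ 2 := by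
      nlinarith [norm_nonneg (u n).1, hu1 n]
    rw [lt_div_iff₀ h1] at hn
    have habs : ‖(u n).2‖ ≤ ‖(u n).1‖ := by
      nlinarith [norm_nonneg (u n).1, norm_nonneg (u n).2]
    rw [pd_zero, pd_zero]
    exact artanh_mono (norm_nonneg _) habs (hu1 n)
  have hfr2 : ∃ᶠ n in atTop, pd 0 (u n).1 ≤ pd 0 (u n).2 := by
    have := Filter.frequently_lt_of_lt_limsup (by isBoundedDefault) hT₁
    refine this.mono fun n hn => ?_
    rw [ENNReal.one_lt_ofReal] at hn
    have h2 : (0:ℝ) < 1 - (‖(u n).2‖) ^ 2 := by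
      nlinarith [norm_nonneg (u n).2, hu2 n]
    rw [lt_div_iff₀ h2] at hn
    have habs : ‖(u n).1‖ ≤ ‖(u n).2‖ := by
      nlinarith [norm_nonneg (u n).1, norm_nonneg (u n).2]
    rw [pd_zero, pd_zero]
    exact artanh_mono (norm_nonneg _) habs (hu2 n)
  -- the limsup computation for points in the bidisc
  have hls : ∀ z₁ z₂ : ℂ, ‖z₁‖ < 1 → ‖z₂‖ < 1 →
      Filter.limsup (fun n => kd2 (z₁, z₂) (u n) - kd2 ((0:ℂ), (0:ℂ)) (u n)) Filter.atTop
        = max ((1/2) * Real.log ((‖ζ₁ - z₁‖) ^ 2 / (1 - (‖z₁‖) ^ 2)))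
              ((1/2) * Real.log ((‖ζ₂ - z₂‖) ^ 2 / (1 - (‖z₂‖) ^ 2))) := by
    intro z₁ z₂ hz1 hz2
    have ha := pd_diff_tendsto ζ₁ z₁ hζ₁ hz1 (fun n => (u n).1) hu1 hc1
    have hb := pd_diff_tendsto ζ₂ z₂ hζ₂ hz2 (fun n => (u n).2) hu2 hc2
    have := limsup_max_sub_max ha hb hfr1 hfr2
    exact this
  -- positivity of the Julia quotients
  have hpos : ∀ (ζ z : ℂ), ‖ζ‖ = 1 → ‖z‖ < 1 →
      0 < (‖ζ - z‖) ^ 2 / (1 - (‖z‖) ^ 2) := by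
    intro ζ z hζ hz
    have hne : ζ - z ≠ 0 := by
      intro h
      have : ζ = z := by linear_combination h
      rw [← this, hζ] at hz; exact lt_irrefl _ hz
    have h1 : 0 < ‖ζ - z‖ := norm_pos_iff.mpr hne
    have h2 : (0:ℝ) < 1 - (‖z‖) ^ 2 := by nlinarith [norm_nonneg z]
    positivity
  ext ⟨z₁, z₂⟩
  simp only [biE, bidisc, Set.mem_setOf_eq, Set.mem_prod]
  constructor
  · rintro ⟨⟨h1, h2⟩, hlt⟩
    rw [hls z₁ z₂ h1 h2, max_lt_iff] at hlt
    exact ⟨⟨h1, (half_log_lt_half_log (hpos ζ₁ z₁ hζ₁ h1) hR).mp hlt.1⟩,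
      ⟨h2, (half_log_lt_half_log (hpos ζ₂ z₂ hζ₂ h2) hR).mp hlt.2⟩⟩
  · rintro ⟨⟨h1, hm1⟩, ⟨h2, hm2⟩⟩
    refine ⟨⟨h1, h2⟩, ?_⟩
    rw [hls z₁ z₂ h1 h2, max_lt_iff]
    exact ⟨(half_log_lt_half_log (hpos ζ₁ z₁ hζ₁ h1) hR).mpr hm1,
      (half_log_lt_half_log (hpos ζ₂ z₂ hζ₂ h2) hR).mpr hm2⟩
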